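/- If α = p/q with p, q coprime integers, then for every fixed λ ∈ R, N_ε(λ) = ε⁻¹ Σ_{k ∈ Z, |k| < (√λ/(2π))√(p²+q²)} (1/(π√(p²+q²)))·(λ - 4π²k²/(p²+q²))^{1/2} + o(ε⁻¹) as ε → 0+. -/

import Mathlib

open Real Filter Topology

/-- The eigenvalues λ_{kl}(ε) of Δ_ε on the torus. -/
noncomputable def lamkl (α ε : ℝ) (k l : ℤ) : ℝ :=
  (2 * Real.pi) ^ 2 * ((k + α * l) ^ 2 / (1 + α ^ 2)
    + ε ^ 2 * (-α * k + l) ^ 2 / (1 + α ^ 2))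

/-- The eigenvalue distribution function N_ε(λ). -/
noncomputable def Neps (α ε lam : ℝ) : ℝ :=
  Nat.card {p : ℤ × ℤ | lamkl α ε p.1 p.2 < lam}

private lemma count_AP (D : ℤ) (hD : 0 < D) (r : ℤ) (T : ℝ) (hT : 0 < T) :
    |(Nat.card {n : ℤ | D ∣ (n - r) ∧ |(n:ℝ)| < T} : ℝ) - 2 * T / D| ≤ 2 := by
  have hDR : (0:ℝ) < (D:ℝ) := by exact_mod_cast hD
  set a : ℝ := (-T - r) / D with ha
  set b : ℝ := (T - r) / D with hb
  have himg : {n : ℤ | D ∣ (n - r) ∧ |(n:ℝ)| < T}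
      = (fun j => r + D * j) '' {j : ℤ | a < (j:ℝ) ∧ (j:ℝ) < b} := by
    ext n
    simp only [Set.mem_setOf_eq, Set.mem_image]
    constructor
    · rintro ⟨⟨t, ht⟩, habs⟩
      refine ⟨t, ⟨?_, ?_⟩, by omega⟩
      · rw [ha, div_lt_iff₀ hDR]
        have h1 : -T < (n:ℝ) := (abs_lt.mp habs).1
        have h2 : ((n:ℝ)) - r = t * D := by exact_mod_cast ht.trans (mul_comm D t)
        linarith
      · rw [hb, lt_div_iff₀ hDR]
        have h1 : (n:ℝ) < T := (abs_lt.mp habs).2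
        have h2 : ((n:ℝ)) - r = t * D := by exact_mod_cast ht.trans (mul_comm D t)
        linarith
    · rintro ⟨j, ⟨hj1, hj2⟩, rfl⟩
      refine ⟨⟨j, by ring⟩, ?_⟩
      rw [abs_lt]
      rw [ha, div_lt_iff₀ hDR] at hj1
      rw [hb, lt_div_iff₀ hDR] at hj2
      constructor <;> push_cast <;> linarith
  have hset : {j : ℤ | a < (j:ℝ) ∧ (j:ℝ) < b} = ↑(Finset.Ioo ⌊a⌋ ⌈b⌉) := by
    ext j
    simp [Int.floor_lt, Int.lt_ceil]
  have hinj : Function.Injective (fun j : ℤ => r + D * j) := by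
    intro x y h
    simp only at h
    have : D * x = D * y := by omega
    exact mul_left_cancel₀ (by omega) this
  have hcard : (Nat.card {n : ℤ | D ∣ (n - r) ∧ |(n:ℝ)| < T} : ℝ)
      = ((⌈b⌉ - ⌊a⌋ - 1).toNat : ℝ) := by
    rw [himg, Nat.card_coe_set_eq, Set.ncard_image_of_injective _ hinj, hset,
      Set.ncard_coe_finset, Int.card_Ioo]
  rw [hcard]
  have hba : b - a = 2 * T / D := by rw [ha, hb, div_sub_div_same]; ring_nf
  have h1 : (⌈b⌉ : ℝ) < b + 1 := Int.ceil_lt_add_one b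
  have h2 : (b:ℝ) ≤ ⌈b⌉ := Int.le_ceil b
  have h3 : a - 1 < ⌊a⌋ := Int.sub_one_lt_floor a
  have h4 : (⌊a⌋:ℝ) ≤ a := Int.floor_le a
  rcases le_or_gt 0 (⌈b⌉ - ⌊a⌋ - 1) with h | h
  · have hcast : (((⌈b⌉ - ⌊a⌋ - 1).toNat : ℤ) : ℝ) = (⌈b⌉:ℝ) - ⌊a⌋ - 1 := by
      rw [Int.toNat_of_nonneg h]; push_cast; ring
    rw [abs_le, ← Int.cast_natCast ((⌈b⌉ - ⌊a⌋ - 1).toNat), hcast]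
    constructor <;> linarith
  · rw [Int.toNat_of_nonpos (le_of_lt h)]
    have h' : (⌈b⌉ - ⌊a⌋ - 1 : ℤ) ≤ -1 := by omega
    have : ((⌈b⌉ - ⌊a⌋ - 1 : ℤ) : ℝ) ≤ -1 := by exact_mod_cast h'
    push_cast at this
    rw [abs_le]
    constructor <;> [linarith; linarith [div_pos (mul_pos two_pos hT) hDR]]

private lemma tendsto_eps_count (D : ℤ) (hD : 0 < D) (r : ℤ) (A : ℝ) (hA : 0 ≤ A) :
    Tendsto (fun ε : ℝ => ε * (Nat.card {n : ℤ | D ∣ (n - r) ∧ |(n:ℝ)| < A / ε} : ℝ))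
      (𝓝[>] 0) (𝓝 (2 * A / D)) := by
  have hDR : (0:ℝ) < (D:ℝ) := by exact_mod_cast hD
  rcases eq_or_lt_of_le hA with h0 | hApos
  · have hempty : ∀ ε : ℝ, {n : ℤ | D ∣ (n - r) ∧ |(n:ℝ)| < A / ε} = ∅ := by
      intro ε
      ext n
      simp only [Set.mem_setOf_eq, Set.mem_empty_iff_false, iff_false, not_and]
      intro _
      rw [← h0, zero_div]
      exact not_lt.mpr (abs_nonneg _)
    simp only [hempty, Nat.card_eq_fintype_card]
    rw [← h0]
    simpa using tendsto_const_nhds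
  · have key : ∀ᶠ ε in 𝓝[>] (0:ℝ),
        ‖ε * (Nat.card {n : ℤ | D ∣ (n - r) ∧ |(n:ℝ)| < A / ε} : ℝ) - 2 * A / D‖ ≤ 2 * ε := by
      filter_upwards [self_mem_nhdsWithin] with ε (hε : 0 < ε)
      have hT : 0 < A / ε := div_pos hApos hε
      have hAP := count_AP D hD r (A / ε) hT
      have heq : ε * (2 * (A / ε) / D) = 2 * A / D := by field_simp
      calc ‖ε * (Nat.card {n : ℤ | D ∣ (n - r) ∧ |(n:ℝ)| < A / ε} : ℝ) - 2 * A / D‖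
          = ε * |(Nat.card {n : ℤ | D ∣ (n - r) ∧ |(n:ℝ)| < A / ε} : ℝ) - 2 * (A / ε) / D| := by
            rw [← heq, ← mul_sub, Real.norm_eq_abs, abs_mul, abs_of_pos hε]
        _ ≤ ε * 2 := mul_le_mul_of_nonneg_left hAP hε.le
        _ = 2 * ε := by ring
    have h2 : Tendsto (fun ε : ℝ => 2 * ε) (𝓝[>] 0) (𝓝 0) := by
      have : Tendsto (fun ε : ℝ => 2 * ε) (𝓝 0) (𝓝 (2 * 0)) :=
        (continuous_const.mul continuous_id).tendsto 0
      simpa using this.mono_left nhdsWithin_le_nhds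
    have h3 := squeeze_zero_norm' key h2
    have := h3.add_const (2 * A / D)
    simpa using this

private lemma dvd_shift (a b D p q m n : ℤ) (hab : a * D + b * q = 1) :
    (D ∣ p * m + q * n ↔ D ∣ n - (-(b * p * m))) := by
  constructor
  · rintro ⟨t, ht⟩
    exact ⟨a * n + b * t, by linear_combination b * ht - n * hab⟩
  · rintro ⟨s, hs⟩
    exact ⟨q * s + a * p * m, by linear_combination q * hs - p * m * hab⟩

private lemma lamkl_lt_iff (p q : ℤ) (hq : q ≠ 0) (ε lam : ℝ) (k l : ℤ) :
    lamkl ((p:ℝ)/q) ε k l < lam ↔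
      ((q * k + p * l : ℤ):ℝ)^2 + ε^2 * ((q * l - p * k : ℤ):ℝ)^2
        < lam * ((p:ℝ)^2 + (q:ℝ)^2) / (4 * Real.pi^2) := by
  have hq' : (q:ℝ) ≠ 0 := Int.cast_ne_zero.mpr hq
  have hD : (0:ℝ) < (p:ℝ)^2 + (q:ℝ)^2 := by positivity
  have hpi : (0:ℝ) < 4 * Real.pi^2 := by positivity
  have hlam : lamkl ((p:ℝ)/q) ε k l
      = 4 * Real.pi^2 * (((q * k + p * l : ℤ):ℝ)^2 + ε^2 * ((q * l - p * k : ℤ):ℝ)^2)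
        / ((p:ℝ)^2 + (q:ℝ)^2) := by
    unfold lamkl
    push_cast
    field_simp
    ring
  rw [hlam, div_lt_iff₀ hD, lt_div_iff₀ hpi]
  constructor <;> intro h <;> nlinarith

theorem weyl_rational (p q : ℤ) (hq : q ≠ 0) (hpq : IsCoprime p q) (lam : ℝ) :
    Tendsto (fun ε : ℝ => ε * Neps ((p : ℝ) / q) ε lam) (𝓝[>] 0)
      (𝓝 (∑' k : ℤ,
        if |(k : ℝ)| < Real.sqrt lam / (2 * Real.pi) * Real.sqrt ((p : ℝ) ^ 2 + (q : ℝ) ^ 2)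
        then (1 / (Real.pi * Real.sqrt ((p : ℝ) ^ 2 + (q : ℝ) ^ 2))) *
          Real.sqrt (lam - 4 * Real.pi ^ 2 * (k : ℝ) ^ 2 / ((p : ℝ) ^ 2 + (q : ℝ) ^ 2))
        else 0)) := by
  classical
  have hq' : (q:ℝ) ≠ 0 := Int.cast_ne_zero.mpr hq
  set Dz : ℤ := p ^ 2 + q ^ 2 with hDzdef
  have hq2 : (0:ℤ) < q ^ 2 := by positivity
  have hDzpos : 0 < Dz := by nlinarith [sq_nonneg p]
  set D : ℝ := (p:ℝ) ^ 2 + (q:ℝ) ^ 2 with hDdef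
  have hDR : (0:ℝ) < D := by positivity
  have hDcast : ((Dz:ℤ):ℝ) = D := by push_cast [hDzdef]; ring
  set c : ℝ := lam * D / (4 * Real.pi ^ 2) with hcdef
  have hDq : IsCoprime Dz q := by
    have := (hpq.mul_left hpq).add_mul_left_left q
    have hrw : p * p + q * q = Dz := by ring
    rwa [hrw] at this
  obtain ⟨a, b, hab⟩ := hDq
  set r : ℤ → ℤ := fun m => -(b * p * m) with hrdef
  set B : ℤ := ⌈Real.sqrt c⌉ with hBdef
  set M : Finset ℤ := Finset.Icc (-B) B with hMdef
  set A : ℤ → ℝ := fun m => Real.sqrt (c - (m:ℝ) ^ 2) with hAdef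
  clear_value Dz D c B
  -- membership in M
  have hmemM : ∀ m : ℤ, (m:ℝ) ^ 2 < c → m ∈ M := by
    intro m hm
    have h1 : |(m:ℝ)| < Real.sqrt c := (Real.lt_sqrt (abs_nonneg _)).mpr (by rwa [sq_abs])
    have h2 : |(m:ℝ)| < (B:ℝ) + 1 := by
      rw [hBdef]
      exact lt_of_lt_of_le h1 ((Int.le_ceil _).trans (by norm_num))
    rw [← Int.cast_abs] at h2
    have h3 : |m| < B + 1 := by exact_mod_cast h2
    have h5 := abs_lt.mp h3
    rw [hMdef, Finset.mem_Icc]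
    omega
  -- limits of the fiber counts
  have htend : ∀ m ∈ M, Tendsto
      (fun ε : ℝ => ε * (Nat.card {n : ℤ | Dz ∣ (n - r m) ∧ |(n:ℝ)| < A m / ε} : ℝ))
      (𝓝[>] 0) (𝓝 (2 * A m / (Dz:ℝ))) :=
    fun m _ => tendsto_eps_count Dz hDzpos (r m) (A m) (Real.sqrt_nonneg _)
  -- decomposition of Neps
  have hdecomp : ∀ ε : ℝ, 0 < ε → Neps ((p:ℝ)/q) ε lam
      = ∑ m ∈ M, (Nat.card {n : ℤ | Dz ∣ (n - r m) ∧ |(n:ℝ)| < A m / ε} : ℝ) := by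
    intro ε hε
    -- the condition on the transformed pair
    have hcond : ∀ m n : ℤ, ((m:ℝ) ^ 2 + ε ^ 2 * (n:ℝ) ^ 2 < c) ↔ |(n:ℝ)| < A m / ε := by
      intro m n
      rw [lt_div_iff₀ hε, hAdef]
      have habs : (|(n:ℝ)| * ε) ^ 2 = ε ^ 2 * (n:ℝ) ^ 2 := by
        rw [mul_pow, sq_abs]; ring
      rw [show (|(n:ℝ)| * ε < Real.sqrt (c - (m:ℝ)^2)) ↔ ((|(n:ℝ)| * ε)^2 < c - (m:ℝ)^2)
        from Real.lt_sqrt (by positivity), habs]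
      constructor <;> intro h <;> linarith
    set e : ℤ × ℤ → ℤ × ℤ := fun x => (q * x.1 + p * x.2, q * x.2 - p * x.1) with hedef
    have hinj : Function.Injective e := by
      rintro ⟨k, l⟩ ⟨k', l'⟩ h
      rw [hedef, Prod.ext_iff] at h
      obtain ⟨h1, h2⟩ := h
      simp only at h1 h2
      have hk : Dz * k = Dz * k' := by
        rw [hDzdef]; linear_combination q * h1 - p * h2
      have hl : Dz * l = Dz * l' := by
        rw [hDzdef]; linear_combination p * h1 + q * h2
      have hDne : Dz ≠ 0 := by omega
      exact Prod.ext (mul_left_cancel₀ hDne hk) (mul_left_cancel₀ hDne hl)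
    have himg : e '' {x : ℤ × ℤ | lamkl ((p:ℝ)/q) ε x.1 x.2 < lam}
        = {y : ℤ × ℤ | Dz ∣ (y.2 - r y.1) ∧ ((y.1:ℝ) ^ 2 + ε ^ 2 * (y.2:ℝ) ^ 2 < c)} := by
      ext ⟨m, n⟩
      simp only [Set.mem_image, Set.mem_setOf_eq]
      constructor
      · rintro ⟨⟨k, l⟩, hkl, heq⟩
        rw [hedef, Prod.ext_iff] at heq
        obtain ⟨hm, hn⟩ := heq
        simp only at hm hn
        rw [lamkl_lt_iff p q hq] at hkl
        constructor
        · simp only [hrdef, ← dvd_shift a b Dz p q m n hab]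
          exact ⟨l, by rw [hDzdef]; linear_combination (-p) * hm + (-q) * hn⟩
        · rw [← hm, ← hn, hcdef, hDdef]
          push_cast
          push_cast at hkl
          convert hkl using 2 <;> ring
      · rintro ⟨hdvd, hineq⟩
        simp only [hrdef] at hdvd
        rw [← dvd_shift a b Dz p q m n hab] at hdvd
        have h2 : Dz ∣ q * (q * m - p * n) := by
          obtain ⟨t, ht⟩ := hdvd
          refine ⟨m - p * t, ?_⟩
          rw [hDzdef] at ht ⊢
          linear_combination (-p) * ht
        have hcop : IsCoprime (p ^ 2 + q ^ 2) q := by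
          have := (hpq.mul_left hpq).add_mul_left_left q
          rwa [show p * p + q * q = p ^ 2 + q ^ 2 from by ring] at this
        have h3 : Dz ∣ (q * m - p * n) := by
          rw [hDzdef]
          exact hcop.dvd_of_dvd_mul_left (by rw [← hDzdef]; exact h2)
        obtain ⟨k, hk⟩ := h3
        obtain ⟨l, hl⟩ := hdvd
        have hDne : Dz ≠ 0 := by omega
        have hm : q * k + p * l = m := by
          have : Dz * (q * k + p * l) = Dz * m := by
            rw [hDzdef]; rw [hDzdef] at hk hl; linear_combination (-q) * hk + (-p) * hl
          exact mul_left_cancel₀ hDne this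
        have hn : q * l - p * k = n := by
          have : Dz * (q * l - p * k) = Dz * n := by
            rw [hDzdef]; rw [hDzdef] at hk hl; linear_combination (-q) * hl + p * hk
          exact mul_left_cancel₀ hDne this
        refine ⟨(k, l), ?_, ?_⟩
        · show lamkl ((p:ℝ)/q) ε k l < lam
          rw [lamkl_lt_iff p q hq, hm, hn]
          rw [hcdef, hDdef] at hineq
          push_cast
          push_cast at hineq
          convert hineq using 2 <;> ring
        · rw [hedef]
          simp only [hm, hn]
      -- end himg
    -- from Nat.card of pair set to finset
    set B' : ℤ := ⌈Real.sqrt c / ε⌉ with hB'def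
    set N : Finset ℤ := Finset.Ioo (-(B' + 1)) (B' + 1) with hNdef
    set P : ℤ × ℤ → Prop :=
      fun y => Dz ∣ (y.2 - r y.1) ∧ ((y.1:ℝ) ^ 2 + ε ^ 2 * (y.2:ℝ) ^ 2 < c) with hPdef
    have hmemN : ∀ m n : ℤ, ((m:ℝ) ^ 2 + ε ^ 2 * (n:ℝ) ^ 2 < c) → n ∈ N := by
      intro m n hmn
      have h1 : |(n:ℝ)| < A m / ε := (hcond m n).mp hmn
      have h2 : A m ≤ Real.sqrt c := Real.sqrt_le_sqrt (by nlinarith [sq_nonneg ((m:ℝ))])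
      have h3 : |(n:ℝ)| < (B':ℝ) + 1 := by
        calc |(n:ℝ)| < A m / ε := h1
          _ ≤ Real.sqrt c / ε := by gcongr
          _ ≤ (B':ℝ) := Int.le_ceil _
          _ ≤ (B':ℝ) + 1 := by norm_num
      rw [← Int.cast_abs] at h3
      have h4 : |n| < B' + 1 := by exact_mod_cast h3
      have h5 := abs_lt.mp h4
      rw [hNdef, Finset.mem_Ioo]
      omega
    have hsubset : {y : ℤ × ℤ | P y} = ↑((M ×ˢ N).filter P) := by
      ext ⟨m, n⟩
      simp only [Set.mem_setOf_eq, Finset.coe_filter, Finset.mem_product]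
      constructor
      · intro hy
        exact ⟨⟨hmemM m (by nlinarith [sq_nonneg (ε * (n:ℝ)), hy.2]), hmemN m n hy.2⟩, hy⟩
      · exact fun hy => hy.2
    have hstep1 : Neps ((p:ℝ)/q) ε lam = (((M ×ˢ N).filter P).card : ℝ) := by
      unfold Neps
      congr 1
      rw [Nat.card_coe_set_eq, ← Set.ncard_image_of_injective _ hinj, himg,
        show {y : ℤ × ℤ | Dz ∣ (y.2 - r y.1) ∧ ((y.1:ℝ) ^ 2 + ε ^ 2 * (y.2:ℝ) ^ 2 < c)}
          = {y : ℤ × ℤ | P y} from rfl, hsubset, Set.ncard_coe_finset]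
    have hstep2 : (((M ×ˢ N).filter P).card : ℝ)
        = ∑ m ∈ M, ((N.filter (fun n => P (m, n))).card : ℝ) := by
      rw_mod_cast [Finset.card_filter, Finset.sum_product]
      push_cast
      congr 1
      ext m
      rw [Finset.card_filter]
    have hstep3 : ∀ m ∈ M, ((N.filter (fun n => P (m, n))).card : ℝ)
        = (Nat.card {n : ℤ | Dz ∣ (n - r m) ∧ |(n:ℝ)| < A m / ε} : ℝ) := by
      intro m _
      congr 1
      have hseteq : {n : ℤ | Dz ∣ (n - r m) ∧ |(n:ℝ)| < A m / ε}
          = ↑(N.filter (fun n => P (m, n))) := by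
        ext n
        simp only [Set.mem_setOf_eq, Finset.coe_filter, hPdef]
        constructor
        · intro hy
          have hlt : (m:ℝ) ^ 2 + ε ^ 2 * (n:ℝ) ^ 2 < c := (hcond m n).mpr hy.2
          exact ⟨hmemN m n hlt, hy.1, hlt⟩
        · exact fun hy => ⟨hy.2.1, (hcond m n).mp hy.2.2⟩
      rw [hseteq, Nat.card_coe_set_eq, Set.ncard_coe_finset]
    rw [hstep1, hstep2]
    exact Finset.sum_congr rfl hstep3
  -- assemble the limit
  have hlim : Tendsto (fun ε : ℝ => ε * Neps ((p:ℝ)/q) ε lam) (𝓝[>] 0)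
      (𝓝 (∑ m ∈ M, 2 * A m / (Dz:ℝ))) := by
    have hsum := tendsto_finset_sum M htend
    refine hsum.congr' ?_
    filter_upwards [self_mem_nhdsWithin] with ε (hε : 0 < ε)
    rw [hdecomp ε hε, Finset.mul_sum]
  -- identify the limit with the tsum
  have hcondiff : ∀ m : ℤ,
      (|(m:ℝ)| < Real.sqrt lam / (2 * Real.pi) * Real.sqrt D) ↔ (m:ℝ) ^ 2 < c := by
    intro m
    rcases le_or_gt lam 0 with hl | hl
    · have hc0 : c ≤ 0 := by
        rw [hcdef]
        apply div_nonpos_of_nonpos_of_nonneg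
        · exact mul_nonpos_of_nonpos_of_nonneg hl hDR.le
        · positivity
      have hsl : Real.sqrt lam = 0 := Real.sqrt_eq_zero'.mpr hl
      simp only [hsl, zero_div, zero_mul]
      constructor
      · intro h; exact absurd h (not_lt.mpr (abs_nonneg _))
      · intro h; nlinarith [sq_nonneg ((m:ℝ))]
    · have hsqc : Real.sqrt c = Real.sqrt lam / (2 * Real.pi) * Real.sqrt D := by
        have hc2 : c = (Real.sqrt lam / (2 * Real.pi) * Real.sqrt D) ^ 2 := by
          rw [mul_pow, div_pow, Real.sq_sqrt hl.le, Real.sq_sqrt hDR.le, hcdef]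
          ring
        rw [hc2]
        exact Real.sqrt_sq (by positivity)
      rw [← hsqc, show (|(m:ℝ)| < Real.sqrt c) ↔ (|(m:ℝ)|^2 < c)
        from Real.lt_sqrt (abs_nonneg _), sq_abs]
  have hterm : ∀ m : ℤ,
      (if |(m:ℝ)| < Real.sqrt lam / (2 * Real.pi) * Real.sqrt D
        then (1 / (Real.pi * Real.sqrt D)) *
          Real.sqrt (lam - 4 * Real.pi ^ 2 * (m:ℝ) ^ 2 / D)
        else 0) = 2 * A m / (Dz:ℝ) := by
    intro m
    rw [hDcast]
    rcases lt_or_ge ((m:ℝ) ^ 2) c with hm | hm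
    · rw [if_pos ((hcondiff m).mpr hm)]
      have hc : lam - 4 * Real.pi ^ 2 * (m:ℝ) ^ 2 / D = 4 * Real.pi ^ 2 * (c - (m:ℝ)^2) / D := by
        rw [hcdef]; field_simp
      have hsqrtD : Real.sqrt D * Real.sqrt D = D := Real.mul_self_sqrt hDR.le
      have h4pi : Real.sqrt (4 * Real.pi ^ 2) = 2 * Real.pi := by
        rw [show (4 : ℝ) * Real.pi ^ 2 = (2 * Real.pi) ^ 2 from by ring]
        exact Real.sqrt_sq (by positivity)
      simp only [hAdef]
      rw [hc, Real.sqrt_div (by nlinarith [Real.pi_pos] : (0:ℝ) ≤ 4 * Real.pi ^ 2 * (c - (m:ℝ)^2)) D,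
        show (4:ℝ) * Real.pi ^ 2 * (c - (m:ℝ)^2) = (2 * Real.pi) ^ 2 * (c - (m:ℝ)^2) from by ring,
        Real.sqrt_mul (by positivity) (c - (m:ℝ)^2), Real.sqrt_sq (by positivity : (0:ℝ) ≤ 2 * Real.pi)]
      have hpine : Real.pi ≠ 0 := Real.pi_ne_zero
      have hsDne : Real.sqrt D ≠ 0 := ne_of_gt (Real.sqrt_pos.mpr hDR)
      have hrhs : 2 * Real.sqrt (c - (m:ℝ)^2) / D
          = 2 * Real.sqrt (c - (m:ℝ)^2) / (Real.sqrt D * Real.sqrt D) := by rw [hsqrtD]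
      rw [hrhs]
      field_simp
    · rw [if_neg (fun h => absurd ((hcondiff m).mp h) (not_lt.mpr hm))]
      have : A m = 0 := Real.sqrt_eq_zero'.mpr (by linarith)
      rw [this]
      simp
  have htsum : (∑' k : ℤ,
      if |(k : ℝ)| < Real.sqrt lam / (2 * Real.pi) * Real.sqrt D
      then (1 / (Real.pi * Real.sqrt D)) *
        Real.sqrt (lam - 4 * Real.pi ^ 2 * (k : ℝ) ^ 2 / D)
      else 0) = ∑ m ∈ M, 2 * A m / (Dz:ℝ) := by
    rw [tsum_eq_sum (s := M) ?_]
    · exact Finset.sum_congr rfl (fun m _ => hterm m)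
    · intro k hk
      rw [if_neg]
      intro hcondk
      exact hk (hmemM k ((hcondiff k).mp hcondk))
  rw [htsum]
  exact hlim
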